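/- Let a, b, c > 0 and α, β, γ > 1. Then there exists δ > 0 such that there is no point (x₁, x₂, x₃) ∈ (0, δ)³ satisfying simultaneously a·x₂ < x₁^α, b·x₃ < x₂^β, and c·x₁ < x₃^γ. (Three cyclically arranged thin cusps in ℝ³ have empty common intersection near the origin.) -/
import Mathlib


theorem stmt_4 (a b c α β γ : ℝ) (ha : 0 < a) (hb : 0 < b) (hc : 0 < c)
    (hα : 1 < α) (hβ : 1 < β) (hγ : 1 < γ) :
    ∃ δ > 0, ¬ ∃ x₁ x₂ x₃ : ℝ,
      (0 < x₁ ∧ x₁ < δ) ∧ (0 < x₂ ∧ x₂ < δ) ∧ (0 < x₃ ∧ x₃ < δ) ∧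
      a * x₂ < x₁ ^ α ∧ b * x₃ < x₂ ^ β ∧ c * x₁ < x₃ ^ γ := by
  set K : ℝ := a ^ (β * γ) * b ^ γ * c with hK
  have hKpos : 0 < K := by
    have := Real.rpow_pos_of_pos ha (β * γ)
    have := Real.rpow_pos_of_pos hb γ
    positivity
  have hE : 0 < α * β * γ - 1 := by
    have h1 : 1 < α * β := by nlinarith
    nlinarith
  refine ⟨min 1 (K ^ (1 / (α * β * γ - 1))), lt_min one_pos (Real.rpow_pos_of_pos hKpos _), ?_⟩
  rintro ⟨x₁, x₂, x₃, ⟨hx1, hx1δ⟩, ⟨hx2, _⟩, ⟨hx3, _⟩, h1, h2, h3⟩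
  -- step 1: x₂ < x₁^α / a
  have s1 : x₂ < x₁ ^ α / a := (lt_div_iff₀ ha).mpr (by linarith [h1])
  have s1' : x₂ ^ β < (x₁ ^ α / a) ^ β :=
    Real.rpow_lt_rpow hx2.le s1 (by linarith)
  have s2 : x₃ < (x₁ ^ α / a) ^ β / b := (lt_div_iff₀ hb).mpr (by nlinarith [h2])
  have s2' : x₃ ^ γ < ((x₁ ^ α / a) ^ β / b) ^ γ :=
    Real.rpow_lt_rpow hx3.le s2 (by linarith)
  have key : c * x₁ < ((x₁ ^ α / a) ^ β / b) ^ γ := lt_trans h3 s2'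
  have hx1a : (0:ℝ) ≤ x₁ ^ α / a := by positivity
  have hx1ab : (0:ℝ) ≤ (x₁ ^ α / a) ^ β := Real.rpow_nonneg hx1a β
  have simp1 : ((x₁ ^ α / a) ^ β / b) ^ γ = x₁ ^ (α * β * γ) / (a ^ (β * γ) * b ^ γ) := by
    rw [Real.div_rpow hx1ab hb.le,
        Real.div_rpow (Real.rpow_nonneg hx1.le α) ha.le,
        Real.div_rpow (Real.rpow_nonneg (Real.rpow_nonneg hx1.le α) β) (Real.rpow_nonneg ha.le β),
        ← Real.rpow_mul hx1.le, ← Real.rpow_mul hx1.le, ← Real.rpow_mul ha.le,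
        div_div, mul_assoc α β γ]
  rw [simp1] at key
  have hab : 0 < a ^ (β * γ) * b ^ γ := by
    have := Real.rpow_pos_of_pos ha (β * γ)
    have := Real.rpow_pos_of_pos hb γ
    positivity
  have key2 : K * x₁ < x₁ ^ (α * β * γ) := by
    have := (lt_div_iff₀' hab).mp key
    calc K * x₁ = a ^ (β * γ) * b ^ γ * (c * x₁) := by ring
    _ < x₁ ^ (α * β * γ) := this
  have key3 : K < x₁ ^ (α * β * γ - 1) := by
    rw [Real.rpow_sub hx1, Real.rpow_one]
    exact (lt_div_iff₀ hx1).mpr key2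
  -- but x₁ < K^(1/(αβγ-1)) gives x₁^(αβγ-1) < K
  have hx1K : x₁ < K ^ (1 / (α * β * γ - 1)) := lt_of_lt_of_le hx1δ (min_le_right _ _)
  have : x₁ ^ (α * β * γ - 1) < K := by
    have h := Real.rpow_lt_rpow hx1.le hx1K hE
    rwa [← Real.rpow_mul hKpos.le, one_div, inv_mul_cancel₀ hE.ne', Real.rpow_one] at h
  linarith
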